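/- For any nonzero partition μ, the Dyck class [0 B_μ] is a NU₁-initial object: there is no Dyck class δ in the domain of NU₁ with NU₁(δ) = [0 B_μ]. Equivalently, the partition corresponding to [0 B_μ] has largest part strictly less than its number of parts. -/

import Mathlib

/-- dinv contribution of an entry coming from extended negative positions. -/
def negContrib (x : ℤ) : ℕ := (if x ≤ -1 then 1 else 0) + (if x ≤ -2 then 1 else 0)

/-- The diagonal inversion statistic of a quasi-Dyck vector, with the
convention `v_k = k - 1` for `k ≤ 0`. -/
def dinv (v : List ℤ) : ℕ :=
  (Finset.univ.filter (fun p : Fin v.length × Fin v.length =>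
      (p.1 : ℕ) < (p.2 : ℕ) ∧ (v.get p.1 - v.get p.2 = 0 ∨ v.get p.1 - v.get p.2 = 1))).card
  + (v.map negContrib).sum

def area (v : List ℤ) : ℤ := v.sum

def defc (v : List ℤ) : ℤ := (v.length.choose 2 : ℤ) - area v - (dinv v : ℤ)

/-- Quasi-Dyck vector: nonempty, starts with 0, consecutive increases ≤ 1. -/
def IsQDV (v : List ℤ) : Prop :=
  v.head? = some 0 ∧ ∀ i : ℕ, i + 1 < v.length → v.getD (i + 1) 0 ≤ v.getD i 0 + 1

def IsDyck (v : List ℤ) : Prop := IsQDV v ∧ ∀ x ∈ v, 0 ≤ x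

def stepRel (v w : List ℤ) : Prop := w = 0 :: v.map (· + 1)

def dyckEquiv : List ℤ → List ℤ → Prop := Relation.EqvGen stepRel

def dyckSetoid : Setoid (List ℤ) := Relation.EqvGen.setoid stepRel

abbrev DyckClass := Quotient dyckSetoid

def cls (v : List ℤ) : DyckClass := Quotient.mk dyckSetoid v

/-- Reduced Dyck vector: a Dyck vector that is not `0 z⁺` for a Dyck vector `z`. -/
def IsReducedDV (v : List ℤ) : Prop :=
  IsDyck v ∧ ¬ ∃ z : List ℤ, IsDyck z ∧ v = 0 :: z.map (· + 1)

/-- The leader of a QDV: the largest `d` such that `v` starts with `0,1,...,d`. -/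
def leader (v : List ℤ) : ℕ :=
  Nat.findGreatest (fun d => ∀ i, i ≤ d → v.getD i 0 = (i : ℤ)) (v.length - 1)

/-- Delete the leader symbol and append `leader - 1`. -/
def nuStep (v : List ℤ) : List ℤ :=
  v.take (leader v) ++ v.drop (leader v + 1) ++ [(leader v : ℤ) - 1]

def nuApplies (v : List ℤ) : Prop :=
  IsQDV v ∧ 2 ≤ v.length ∧ 0 ≤ v.getD 1 0 ∧ (leader v : ℤ) ≤ v.getLastD 0 + 2

/-- The map NU₁ on Dyck classes, as a relation. -/
def nuClassRel (c c' : DyckClass) : Prop :=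
  ∃ v, nuApplies v ∧ c = cls v ∧ c' = cls (nuStep v)

def stepOk (A : List ℤ) : Prop := ∀ i : ℕ, i + 1 < A.length → A.getD (i + 1) 0 ≤ A.getD i 0 + 1

def okA (A : List ℤ) : Prop :=
  A = [] ∨ ((∀ x ∈ A, x ≤ 2) ∧ 0 ≤ A.getLastD 0 ∧ stepOk A)

def okB (B : List ℤ) : Prop :=
  B = [] ∨ ((∀ x ∈ B, x ≤ 2) ∧ B.headD 0 ≤ 1 ∧ -1 ≤ B.getLastD 0 ∧ stepOk B)

/-- The map NU₂ on Dyck classes, as a relation. -/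
def nu2ClassRel (c c' : DyckClass) : Prop :=
  (∃ (h : ℕ) (A : List ℤ), 2 ≤ h ∧ okA A ∧
      c = cls ([0, 1] ++ List.replicate h (2:ℤ) ++ A ++ List.replicate (h - 1) (-1)) ∧
      c' = cls (List.replicate h (0:ℤ) ++ [1] ++ A ++ List.replicate h 1)) ∨
  (∃ (k : ℕ) (B : List ℤ), 1 ≤ k ∧ okB B ∧
      c = cls ([0, 1] ++ List.replicate k (2:ℤ) ++ B ++ List.replicate k (-1)) ∧
      c' = cls (List.replicate (k + 1) (0:ℤ) ++ B ++ [0] ++ List.replicate k 1))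

/-- The extended next-up map NU = NU₁ ∪ NU₂, as a relation on Dyck classes. -/
def nuRel (c c' : DyckClass) : Prop := nuClassRel c c' ∨ nu2ClassRel c c'

/-- An integer partition, given by its weakly decreasing list of positive parts. -/
def IsPartitionList (l : List ℕ) : Prop := l.Pairwise (· ≥ ·) ∧ ∀ x ∈ l, 0 < x

/-- `phi l n` = the QDV `(0 - λ_n, 1 - λ_{n-1}, ..., (n-1) - λ_1)`. -/
def phi (l : List ℕ) (n : ℕ) : List ℤ :=
  List.ofFn (fun i : Fin n => (i : ℤ) - (l.getD (n - 1 - (i : ℕ)) 0 : ℤ))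

def nuOne (g : List ℕ) : List ℕ :=
  (g.length + 1) :: (g.map (· - 1)).filter (fun x => 0 < x)

def ndOne (g : List ℕ) : List ℕ :=
  g.tail.map (· + 1) ++ List.replicate (g.headD 0 - g.length) 1

/-- dinv of a partition: number of cells with arm - leg ∈ {0,1}. -/
def pdinv (l : List ℕ) : ℕ :=
  (Finset.univ.filter (fun c : Fin l.length × Fin (l.headD 0) =>
    (c.2 : ℕ) < l.get c.1 ∧
      (l.get c.1 - 1 - (c.2 : ℕ) =
          (Finset.univ.filter (fun i' : Fin l.length =>
            (c.1 : ℕ) < (i' : ℕ) ∧ (c.2 : ℕ) < l.get i')).card ∨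
        l.get c.1 - 1 - (c.2 : ℕ) =
          (Finset.univ.filter (fun i' : Fin l.length =>
            (c.1 : ℕ) < (i' : ℕ) ∧ (c.2 : ℕ) < l.get i')).card + 1))).card

/-- `bWord [n_1, ..., n_r]` = `0 1^{n_1} 0 1^{n_2} ⋯ 0 1^{n_r}`. -/
def bWord (ns : List ℕ) : List ℤ :=
  (ns.map (fun m => (0:ℤ) :: List.replicate m 1)).flatten

/-- `msize [n_1, ..., n_r] = Σ i·n_i`, the size of the partition `(r^{n_r},...,1^{n_1})`. -/
def msize (ns : List ℕ) : ℕ :=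
  (List.zipWith (fun m i => m * i) ns (List.range' 1 ns.length)).sum

/-- The reduced Dyck vector `0 B_μ` of the tail initiator of a partition. -/
def tiVec (l : List ℕ) : List ℤ :=
  (0:ℤ) :: ((List.range' 1 (l.headD 0)).map
    (fun i => (0:ℤ) :: List.replicate (l.count i) (1:ℤ))).flatten

/-- `c` is the second-order tail initiator of the partition `l`: obtained from
`[0 B_μ]` by iterating the extended next-down map as long as possible. -/
def IsTI2 (l : List ℕ) (c : DyckClass) : Prop :=
  Relation.ReflTransGen (fun x y => nuRel y x) (cls (tiVec l)) c ∧ ∀ d, ¬ nuRel d c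

/-- `m` is the minimum triangle height of the Dyck class `c`. -/
def mindIs (c : DyckClass) (m : ℕ) : Prop :=
  ∃ v, IsReducedDV v ∧ c = cls v ∧ v.length = m

/-- Flagpole partition: `|μ| + 8 ≤ 2 mind(TI₂(μ))`. -/
def IsFlagpole (l : List ℕ) : Prop :=
  ∃ c m, IsTI2 l c ∧ mindIs c m ∧ l.sum + 8 ≤ 2 * m

/-- The Dyck vector `v(λ,a,ε) = 0 0 1 2^{a-ε} B_λ⁺ 1^ε`. -/
def vLam (ns : List ℕ) (a ε : ℕ) : List ℤ :=
  [0, 0, 1] ++ List.replicate (a - ε) (2:ℤ) ++ (bWord ns).map (· + 1) ++ List.replicate ε 1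

section Aux12

private def fstep12 (v : List ℤ) : List ℤ := (0:ℤ) :: v.map (· + 1)

private def inv12 (v : List ℤ) : ℤ := v.getLastD 0 - (leader v : ℤ)

private lemma leader_le12 (v : List ℤ) : leader v ≤ v.length - 1 :=
  Nat.findGreatest_le _

private lemma leader_spec12 {v : List ℤ} (h0 : v.getD 0 0 = 0) :
    ∀ i ≤ leader v, v.getD i 0 = (i : ℤ) := by
  have := Nat.findGreatest_spec (P := fun d => ∀ i, i ≤ d → v.getD i 0 = (i : ℤ))
    (Nat.zero_le (v.length - 1)) (by intro i hi; interval_cases i; simpa using h0)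
  exact this

private lemma leader_fstep12 {v : List ℤ} (hne : v ≠ []) (h0 : v.getD 0 0 = 0) :
    leader (fstep12 v) = leader v + 1 := by
  have hlen : (fstep12 v).length = v.length + 1 := by simp [fstep12]
  have hvlen : 1 ≤ v.length := List.length_pos_iff.2 hne
  have hL : leader v ≤ v.length - 1 := leader_le12 v
  have hspec := leader_spec12 h0
  have hgd : ∀ j : ℕ, j < v.length → (fstep12 v).getD (j+1) 0 = v.getD j 0 + 1 := by
    intro j hj
    show (v.map (· + 1)).getD j 0 = v.getD j 0 + 1
    rw [List.getD_eq_getElem _ _ (by simpa using hj), List.getD_eq_getElem _ _ hj,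
      List.getElem_map]
  show Nat.findGreatest _ ((fstep12 v).length - 1) = leader v + 1
  rw [Nat.findGreatest_eq_iff]
  refine ⟨by omega, fun _ => ?_, fun n hn hnle hP => ?_⟩
  · intro i hi
    match i, hi with
    | 0, _ => rfl
    | j + 1, hi =>
      rw [hgd j (by omega), hspec j (by omega)]
      push_cast
      ring
  · -- P n for some n > leader v + 1 leads to contradiction
    rw [hlen] at hnle
    have hP' : ∀ i, i ≤ leader v + 1 → v.getD i 0 = (i : ℤ) := by
      intro i hi
      have h1 : i + 1 ≤ n := by omega
      have := hP (i + 1) h1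
      rw [hgd i (by omega)] at this
      push_cast at this ⊢
      linarith
    have := Nat.le_findGreatest (P := fun d => ∀ i, i ≤ d → v.getD i 0 = (i : ℤ))
      (m := leader v + 1) (n := v.length - 1) (by omega) hP'
    have : leader v + 1 ≤ leader v := this
    omega

private lemma getLastD_fstep12 {v : List ℤ} (hne : v ≠ []) :
    (fstep12 v).getLastD 0 = v.getLastD 0 + 1 := by
  rcases v.eq_nil_or_concat with rfl | ⟨L, b, rfl⟩
  · exact absurd rfl hne
  · unfold fstep12
    rw [List.concat_eq_append, List.map_append]
    simp only [List.map_cons, List.map_nil]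
    have h1 : (0:ℤ) :: (L.map (· + 1) ++ [b + 1]) = ((0:ℤ) :: L.map (· + 1)) ++ [b + 1] := rfl
    rw [h1, List.getLastD_eq_getLast?, List.getLast?_concat, List.getLastD_eq_getLast?,
      List.getLast?_concat]
    rfl

private lemma inv12_fstep {v : List ℤ} (hne : v ≠ []) (h0 : v.getD 0 0 = 0) :
    inv12 (fstep12 v) = inv12 v := by
  unfold inv12
  rw [leader_fstep12 hne h0, getLastD_fstep12 hne]
  push_cast
  ring

private lemma good_fstep12 (v : List ℤ) :
    fstep12 v ≠ [] ∧ (fstep12 v).getD 0 0 = 0 := by simp [fstep12]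

private lemma inv12_iter {v : List ℤ} (hne : v ≠ []) (h0 : v.getD 0 0 = 0) :
    ∀ n, inv12 (fstep12^[n] v) = inv12 v := by
  intro n
  induction n generalizing v with
  | zero => rfl
  | succ n ih =>
    rw [Function.iterate_succ_apply, ih (good_fstep12 v).1 (good_fstep12 v).2,
      inv12_fstep hne h0]

private lemma eqv_iterate {x y : List ℤ} (h : Relation.EqvGen stepRel x y) :
    ∃ m n, fstep12^[m] x = fstep12^[n] y := by
  induction h with
  | rel a b hab =>
    refine ⟨1, 0, ?_⟩
    unfold stepRel at hab
    simp only [Function.iterate_one, Function.iterate_zero, id_eq, hab]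
    rfl
  | refl a => exact ⟨0, 0, rfl⟩
  | symm a b _ ih => obtain ⟨m, n, h⟩ := ih; exact ⟨n, m, h.symm⟩
  | trans a b c _ _ ih1 ih2 =>
    obtain ⟨m1, n1, h1⟩ := ih1
    obtain ⟨m2, n2, h2⟩ := ih2
    refine ⟨m2 + m1, n1 + n2, ?_⟩
    rw [Function.iterate_add_apply, h1, ← Function.iterate_add_apply, Nat.add_comm m2 n1,
      Function.iterate_add_apply, h2, ← Function.iterate_add_apply]

private lemma inv12_cls_eq {x y : List ℤ} (hx : x ≠ [] ∧ x.getD 0 0 = 0)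
    (hy : y ≠ [] ∧ y.getD 0 0 = 0) (h : cls x = cls y) : inv12 x = inv12 y := by
  have hq := Quotient.exact h
  obtain ⟨m, n, hmn⟩ := eqv_iterate hq
  have h1 := inv12_iter hx.1 hx.2 m
  have h2 := inv12_iter hy.1 hy.2 n
  rw [← h1, ← h2, hmn]

private lemma bWord_getLastD : ∀ (ns : List ℕ) (d : ℕ) (d' : ℤ), ns ≠ [] →
    0 < ns.getLastD d → (bWord ns).getLastD d' = 1 := by
  intro ns
  induction ns with
  | nil => simp
  | cons m t ih =>
    intro d d' _ hlast
    cases t with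
    | nil =>
      rw [List.getLastD_cons] at hlast
      simp only [List.getLastD] at hlast
      match m, hlast with
      | m + 1, _ =>
        have h4 : bWord [m+1] = ((0:ℤ) :: List.replicate m 1) ++ [1] := by
          unfold bWord
          simp [List.replicate_succ']
        rw [h4, List.getLastD_eq_getLast?, List.getLast?_concat]
        rfl
    | cons l t' =>
      have h2 : bWord (l :: t') ≠ [] := by unfold bWord; simp
      have h3 : bWord (m :: l :: t') = ((0:ℤ) :: List.replicate m 1) ++ bWord (l :: t') := by
        unfold bWord; simp
      rw [h3, List.getLastD_eq_getLast?, List.getLast?_append_of_ne_nil _ h2,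
        ← List.getLastD_eq_getLast?]
      exact ih m d' (by simp) (by rw [List.getLastD_cons] at hlast; exact hlast)

end Aux12

theorem stmt12 (ns : List ℕ) (hne : ns ≠ []) (hlast : 0 < ns.getLastD 0) :
    ∀ c : DyckClass, ¬ nuClassRel c (cls ((0:ℤ) :: bWord ns)) := by
  intro c hrel
  obtain ⟨v, hv, -, hcls⟩ := hrel
  obtain ⟨hqdv, hlen2, hpos1, -⟩ := hv
  have hv0 : v.getD 0 0 = 0 := by
    obtain ⟨h1, -⟩ := hqdv
    cases v with
    | nil => simp at h1
    | cons a t => simp only [List.head?_cons, Option.some.injEq] at h1; simp [h1]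
  set d := leader v with hd
  have hLle : d ≤ v.length - 1 := leader_le12 v
  have hspec := leader_spec12 hv0
  have hlen : (nuStep v).length = v.length := by
    unfold nuStep
    simp only [List.length_append, List.length_take, List.length_drop,
      List.length_cons, List.length_nil]
    omega
  have hlast' : (nuStep v).getLastD 0 = (d : ℤ) - 1 := by
    unfold nuStep
    rw [List.getLastD_eq_getLast?, List.getLast?_concat]
    rfl
  have hget : ∀ i : ℕ, i < d → (nuStep v).getD i 0 = (i : ℤ) := by
    intro i hi
    have htl : (v.take d).length = d := by
      rw [List.length_take]; omega
    unfold nuStep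
    rw [List.getD_append _ _ _ _ (by rw [List.length_append, htl]; omega),
      List.getD_append _ _ _ _ (by rw [htl]; omega),
      List.getD_eq_getElem _ _ (by rw [htl]; omega), List.getElem_take]
    rw [← List.getD_eq_getElem _ 0 (by omega)]
    exact hspec i (by omega)
  have hgood : nuStep v ≠ [] ∧ (nuStep v).getD 0 0 = 0 := by
    refine ⟨fun h => by rw [h] at hlen; simp at hlen; omega, ?_⟩
    rcases Nat.eq_zero_or_pos d with hd0 | hd0
    · have h1 : v.getD 1 0 = 0 := by
        have hstep := hqdv.2 0 (by omega)
        rw [hv0] at hstep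
        have hne1 : v.getD 1 0 ≠ 1 := by
          intro h
          have hge : 1 ≤ leader v := by
            apply Nat.le_findGreatest (by omega)
            intro i hi
            interval_cases i
            · exact hv0
            · exact_mod_cast h
          omega
        simp only [zero_add] at hstep
        rcases lt_or_eq_of_le hstep with h' | h'
        · omega
        · exact absurd h' hne1
      have h2 : nuStep v = v.drop 1 ++ [(d:ℤ) - 1] := by
        unfold nuStep
        rw [← hd, hd0]
        simp
      rw [h2, List.getD_append _ _ _ _ (by rw [List.length_drop]; omega),
        List.getD_eq_getElem _ _ (by rw [List.length_drop]; omega), List.getElem_drop]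
      rw [← List.getD_eq_getElem _ 0 (by omega)]
      exact h1
    · have := hget 0 hd0
      simpa using this
  have hleader_ge : d - 1 ≤ leader (nuStep v) := by
    show d - 1 ≤ Nat.findGreatest _ ((nuStep v).length - 1)
    apply Nat.le_findGreatest (by omega)
    intro i hi
    rcases Nat.eq_zero_or_pos d with hd0 | hd0
    · have hi0 : i = 0 := by omega
      rw [hi0]
      simpa using hgood.2
    · exact hget i (by omega)
  -- the invariant of the left-hand class is 1
  have hbw_ne : bWord ns ≠ [] := by
    obtain ⟨m, t, rfl⟩ := List.exists_cons_of_ne_nil hne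
    unfold bWord; simp
  have hinvu : inv12 ((0:ℤ) :: bWord ns) = 1 := by
    have hlast1 : ((0:ℤ) :: bWord ns).getLastD 0 = 1 := by
      rw [List.getLastD_cons]
      have := bWord_getLastD ns 0 0 hne hlast
      rw [List.getLastD_eq_getLast?] at this ⊢
      rcases List.eq_nil_or_concat (bWord ns) with h | ⟨L, b, hLb⟩
      · exact absurd h hbw_ne
      · rw [hLb, List.concat_eq_append, List.getLast?_concat] at this ⊢
        exact this
    have hld : leader ((0:ℤ) :: bWord ns) = 0 := by
      show Nat.findGreatest _ _ = 0
      rw [Nat.findGreatest_eq_zero_iff]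
      intro n hn _ hP
      have h1 := hP 1 hn
      have hbw0 : (bWord ns).getD 0 0 = 0 := by
        obtain ⟨m, t, rfl⟩ := List.exists_cons_of_ne_nil hne
        unfold bWord
        simp
      rw [List.getD_cons_succ, hbw0] at h1
      norm_num at h1
    unfold inv12
    rw [hlast1, hld]
    norm_num
  have hinvs : inv12 (nuStep v) ≤ 0 := by
    unfold inv12
    rw [hlast']
    rcases Nat.eq_zero_or_pos d with hd0 | hd0
    · have : (0:ℤ) ≤ (leader (nuStep v) : ℤ) := Int.natCast_nonneg _
      rw [hd0]
      push_cast
      omega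
    · have h1 : ((d:ℤ) - 1) ≤ (leader (nuStep v) : ℤ) := by
        have := hleader_ge
        omega
      omega
  have heq := inv12_cls_eq ⟨by simp, by simp⟩ hgood hcls
  rw [hinvu] at heq
  omega
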